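/- Let N be squarefree, R = [[ℤ, ℤ],[Nℤ, ℤ]] the standard Eichler order of level N in Mat₂(ℚ), ℓ | N, and R(ℓ)⁰ = { [[a, b/ℓ],[cN/ℓ, −a]] : a, b, c ∈ ℤ } the trace-zero part of the partially dualized lattice. Let g ∈ SL₂(ℝ) be such that z = g·i = x + iy ∈ ℍ has maximal imaginary part under the Atkin–Lehner group A₀(N), so the normalized height satisfies H(g) = y. Let λ₁ be the first successive minimum of the convex body Ω(δ,1) ∩ B_∞⁰ on the lattice g^{-1}R(ℓ)⁰g. Then λ₁ ≫ min{ℓ^{-1/2}, ℓ^{-1}·δ^{-1/2}·y^{-1}}. -/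

import Mathlib

set_option maxHeartbeats 1000000


open Complex

namespace Stmt14

/-- Coordinates `[a,b,c] + d ↦ [[d+c, b+a],[b−a, d−c]]` on `Mat₂(ℝ)`:
`P = a² + b² + c² + d²` (half the squared Frobenius norm). -/
noncomputable def P (M : Matrix (Fin 2) (Fin 2) ℝ) : ℝ :=
  ((M 0 1 - M 1 0) / 2) ^ 2 + ((M 0 1 + M 1 0) / 2) ^ 2 +
    ((M 0 0 - M 1 1) / 2) ^ 2 + ((M 0 0 + M 1 1) / 2) ^ 2

/-- `u = b² + c²` in the coordinates above. -/
noncomputable def u (M : Matrix (Fin 2) (Fin 2) ℝ) : ℝ :=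
  ((M 0 1 + M 1 0) / 2) ^ 2 + ((M 0 0 - M 1 1) / 2) ^ 2

/-- The trace-zero part of the partially dualized Eichler order,
`R(ℓ)⁰ = {[[a, b/ℓ],[cN/ℓ, −a]] : a, b, c ∈ ℤ}`, conjugated by `g`. -/
noncomputable def lattice (N ℓ : ℕ) (g : Matrix (Fin 2) (Fin 2) ℝ) :
    Set (Matrix (Fin 2) (Fin 2) ℝ) :=
  {v | ∃ a b c : ℤ, v = g⁻¹ * !![(a : ℝ), (b : ℝ) / ℓ; (c : ℝ) * N / ℓ, -(a : ℝ)] * g}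


lemma moeb_im (a b c d : ℝ) (z : ℂ) :
    (((a:ℂ)*z + (b:ℂ)) / ((c:ℂ)*z + (d:ℂ))).im
      = (a*d - b*c) * z.im / ((c*z.re + d)^2 + (c*z.im)^2) := by
  rw [Complex.div_im]
  have h1 : ((a:ℂ)*z + (b:ℂ)).im = a * z.im := by simp
  have h2 : ((a:ℂ)*z + (b:ℂ)).re = a * z.re + b := by simp
  have h3 : ((c:ℂ)*z + (d:ℂ)).im = c * z.im := by simp
  have h4 : ((c:ℂ)*z + (d:ℂ)).re = c * z.re + d := by simp
  have h5 : Complex.normSq ((c:ℂ)*z + (d:ℂ)) = (c*z.re + d)^2 + (c*z.im)^2 := by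
    rw [Complex.normSq_apply, h3, h4]; ring
  rw [h1, h2, h3, h4, h5]; ring

lemma prim_spacing (N : ℕ) (hN : 0 < N) (hsq : Squarefree N)
    (z : ℂ) (hy : 0 < z.im)
    (H : ∀ (a b c d : ℤ) (Q : ℕ), Q ∣ N → Nat.Coprime Q (N / Q) →
      (N : ℤ) ∣ c → (Q : ℤ) ∣ a → (Q : ℤ) ∣ d → a * d - b * c = (Q : ℤ) →
      ((((a : ℂ) * z + b) / ((c : ℂ) * z + d)).im ≤ z.im))
    (c₁ d₁ : ℤ) (hcop : Int.gcd c₁ d₁ = 1) :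
    (Int.gcd c₁ (N:ℤ) : ℝ) / N ≤ ((c₁:ℝ)*z.re + (d₁:ℝ))^2 + ((c₁:ℝ)*z.im)^2 := by
  set x : ℝ := z.re with hx
  set y : ℝ := z.im with hyy
  set n : ℕ := Int.gcd c₁ (N:ℤ) with hn
  have hnN : n ∣ N := by
    have := Int.gcd_dvd_right (a := c₁) (b := (N:ℤ))
    exact_mod_cast this
  have hn0 : 0 < n := by
    rcases Nat.eq_zero_or_pos n with h | h
    · exfalso
      have h2 := Int.gcd_eq_zero_iff.mp h
      have : (N:ℤ) = 0 := h2.2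
      omega
    · exact h
  set Q : ℕ := N / n with hQ
  have hQn : Q * n = N := Nat.div_mul_cancel hnN
  have hQ0 : 0 < Q := by
    rcases Nat.eq_zero_or_pos Q with h | h
    · exfalso; rw [h, zero_mul] at hQn; omega
    · exact h
  have hQN : Q ∣ N := ⟨n, hQn.symm⟩
  have hNQ : N / Q = n := by
    rw [← hQn, Nat.mul_div_cancel_left _ hQ0]
  have hQcop : Nat.Coprime Q n := by
    have h := hsq
    rw [← hQn] at h
    exact Nat.coprime_of_squarefree_mul h
  -- n ∣ c₁
  have hnc : (n:ℤ) ∣ c₁ := Int.gcd_dvd_left _ _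
  obtain ⟨e, he⟩ := hnc
  -- IsCoprime (Q:ℤ) c₁
  have hQc₁ : IsCoprime ((Q:ℤ)) c₁ := by
    rw [Int.isCoprime_iff_gcd_eq_one]
    have hg : Int.gcd (Q:ℤ) c₁ = Nat.gcd Q c₁.natAbs := by
      simp [Int.gcd]
    rw [hg]
    have hd1 : Nat.gcd Q c₁.natAbs ∣ Q := Nat.gcd_dvd_left _ _
    have hd2 : Nat.gcd Q c₁.natAbs ∣ n := by
      apply Nat.dvd_gcd (Nat.gcd_dvd_right _ _)
      · exact dvd_trans hd1 (by exact_mod_cast hQN)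
    exact Nat.dvd_one.mp (hQcop ▸ Nat.dvd_gcd hd1 hd2)
  have hd₁c₁ : IsCoprime (d₁ : ℤ) c₁ := by
    rw [Int.isCoprime_iff_gcd_eq_one, Int.gcd_comm]
    exact hcop
  have hbez : IsCoprime ((Q:ℤ) * d₁) c₁ := IsCoprime.mul_left hQc₁ hd₁c₁
  obtain ⟨α, β, hab⟩ := hbez
  -- apply H
  have hH := H ((Q:ℤ)*α) (-β) ((Q:ℤ)*c₁) ((Q:ℤ)*d₁) Q hQN (hNQ ▸ hQcop)
    (⟨e, by rw [he]; push_cast [← hQn]; ring⟩)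
    (Dvd.intro _ rfl) (Dvd.intro _ rfl)
    (by linear_combination (Q:ℤ) * hab)
  -- rewrite with real casts
  have hc1 : ∀ (k : ℤ), ((k:ℂ)) = (((k:ℝ)):ℂ) := by intro k; push_cast; ring
  rw [hc1 ((Q:ℤ)*α), hc1 (-β), hc1 ((Q:ℤ)*c₁), hc1 ((Q:ℤ)*d₁), moeb_im] at hH
  set S : ℝ := ((((Q:ℤ)*c₁ : ℤ):ℝ) * x + (((Q:ℤ)*d₁ : ℤ):ℝ))^2 + ((((Q:ℤ)*c₁:ℤ):ℝ)*y)^2 with hS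
  have hdetR : (((Q:ℤ)*α:ℤ):ℝ) * (((Q:ℤ)*d₁:ℤ):ℝ) - ((-β:ℤ):ℝ) * (((Q:ℤ)*c₁:ℤ):ℝ) = (Q:ℝ) := by
    have : ((Q:ℤ)*α) * ((Q:ℤ)*d₁) - (-β) * ((Q:ℤ)*c₁) = (Q:ℤ) := by
      linear_combination (Q:ℤ) * hab
    exact_mod_cast this
  rw [hdetR] at hH
  -- S > 0
  have hT : S = (Q:ℝ)^2 * (((c₁:ℝ)*x + (d₁:ℝ))^2 + ((c₁:ℝ)*y)^2) := by
    rw [hS]; push_cast; ring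
  have hTpos : 0 < ((c₁:ℝ)*x + (d₁:ℝ))^2 + ((c₁:ℝ)*y)^2 := by
    rcases (lt_or_eq_of_le (by positivity : (0:ℝ) ≤ ((c₁:ℝ)*x + (d₁:ℝ))^2 + ((c₁:ℝ)*y)^2)) with h | h
    · exact h
    · exfalso
      have h1 : ((c₁:ℝ)*x + (d₁:ℝ)) = 0 ∧ ((c₁:ℝ)*y) = 0 := by
        constructor <;> nlinarith [sq_nonneg ((c₁:ℝ)*x + (d₁:ℝ)), sq_nonneg ((c₁:ℝ)*y)]
      have hc0 : (c₁ : ℝ) = 0 := by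
        rcases mul_eq_zero.mp h1.2 with h' | h'
        · exact h'
        · exact absurd h' (ne_of_gt hy)
      have hc0' : c₁ = 0 := by exact_mod_cast hc0
      have hd0 : (d₁ : ℝ) = 0 := by rw [hc0, zero_mul, zero_add] at h1; exact h1.1
      have hd0' : d₁ = 0 := by exact_mod_cast hd0
      rw [hc0', hd0'] at hcop
      simp at hcop
  have hSpos : 0 < S := by rw [hT]; positivity
  -- Q*y/S ≤ y  ⇒  Q ≤ S
  have hQS : (Q:ℝ) ≤ S := by
    rw [div_le_iff₀ hSpos] at hH
    nlinarith [hy]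
  have hQR : (0:ℝ) < (Q:ℝ) := by exact_mod_cast hQ0
  have hfin : (n:ℝ)/N = 1/(Q:ℝ) := by
    rw [div_eq_div_iff (Nat.cast_ne_zero.mpr (by omega) : (N:ℝ) ≠ 0) (ne_of_gt hQR)]
    have h' : (Q:ℝ) * n = N := by exact_mod_cast hQn
    linarith [h']
  rw [hT] at hQS
  rw [hfin, div_le_iff₀ hQR]
  nlinarith [hQS, hTpos, hQR]

lemma spacing (N ℓ : ℕ) (hN : 0 < N) (hsq : Squarefree N) (hlN : ℓ ∣ N) (hl : 0 < ℓ)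
    (z : ℂ) (hy : 0 < z.im)
    (H : ∀ (a b c d : ℤ) (Q : ℕ), Q ∣ N → Nat.Coprime Q (N / Q) →
      (N : ℤ) ∣ c → (Q : ℤ) ∣ a → (Q : ℤ) ∣ d → a * d - b * c = (Q : ℤ) →
      ((((a : ℂ) * z + b) / ((c : ℂ) * z + d)).im ≤ z.im))
    (a c : ℤ) (hac : ¬(a = 0 ∧ c = 0)) :
    (ℓ : ℝ) ≤ ((c:ℝ)*N*z.re - a*ℓ)^2 + ((c:ℝ)*N*z.im)^2 := by
  set x : ℝ := z.re
  set y : ℝ := z.im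
  set m : ℕ := Int.gcd (c*(N:ℤ)) (-(a*(ℓ:ℤ))) with hm
  have hm0 : 0 < m := by
    rw [hm, Int.gcd_pos_iff]
    by_contra h
    push_neg at h
    obtain ⟨h1, h2⟩ := h
    apply hac
    constructor
    · have : a * (ℓ:ℤ) = 0 := by omega
      rcases mul_eq_zero.mp this with h' | h'
      · exact h'
      · exfalso; omega
    · rcases mul_eq_zero.mp h1 with h' | h'
      · exact h'
      · exfalso; omega
  have hmdl : (m:ℤ) ∣ c*(N:ℤ) := Int.gcd_dvd_left _ _
  have hmdr : (m:ℤ) ∣ (-(a*(ℓ:ℤ))) := Int.gcd_dvd_right _ _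
  set c₁ : ℤ := c*(N:ℤ) / m with hc₁
  set d₁ : ℤ := (-(a*(ℓ:ℤ))) / m with hd₁
  have he₁ : (m:ℤ) * c₁ = c*(N:ℤ) := Int.mul_ediv_cancel' hmdl
  have he₂ : (m:ℤ) * d₁ = -(a*(ℓ:ℤ)) := Int.mul_ediv_cancel' hmdr
  have hcop : Int.gcd c₁ d₁ = 1 := Int.gcd_div_gcd_div_gcd (by exact_mod_cast hm0)
  set n : ℕ := Int.gcd c₁ (N:ℤ) with hn
  have hn0 : 0 < n := by
    rcases Nat.eq_zero_or_pos n with h | h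
    · exfalso
      have h2 := Int.gcd_eq_zero_iff.mp h
      have : (N:ℤ) = 0 := h2.2
      omega
    · exact h
  -- ℓ ∣ m
  have hlm : ℓ ∣ m := by
    have h1 : (ℓ:ℤ) ∣ c*(N:ℤ) := Dvd.dvd.mul_left (by exact_mod_cast hlN) c
    have h2 : (ℓ:ℤ) ∣ (-(a*(ℓ:ℤ))) := Dvd.dvd.mul_left (dvd_refl _) a |>.neg_right
    have := Int.dvd_gcd h1 h2
    rw [← hm] at this  -- Int.gcd as ℤ?
    exact_mod_cast this
  -- N ∣ m * n
  have hNmn : N ∣ m * n := by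
    have hkey : (m : ℤ) * n = Int.gcd ((m:ℤ)*c₁) ((m:ℤ)*(N:ℤ)) := by
      rw [Int.gcd_mul_left]
      simp
      exact Or.inl hn
    rw [he₁] at hkey
    have h1 : (N:ℤ) ∣ Int.gcd (c*(N:ℤ)) ((m:ℤ)*(N:ℤ)) :=
      Int.dvd_coe_gcd (Dvd.dvd.mul_left (dvd_refl _) c) (Dvd.dvd.mul_left (dvd_refl (N:ℤ)) (m:ℤ))
    rw [← hkey] at h1
    exact_mod_cast h1
  have hmn : N ≤ m * n := Nat.le_of_dvd (by positivity) hNmn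
  have hml : ℓ ≤ m := Nat.le_of_dvd hm0 hlm
  have hkey : ℓ * N ≤ m * m * n := by
    calc ℓ * N ≤ m * (m * n) := Nat.mul_le_mul hml hmn
    _ = m * m * n := by ring
  -- real part
  have hprim := prim_spacing N hN hsq z hy H c₁ d₁ hcop
  rw [← hn] at hprim
  have hRc : ((c:ℝ)*N) = (m:ℝ) * (c₁:ℝ) := by exact_mod_cast congrArg (fun t : ℤ => (t:ℝ)) he₁.symm
  have hRd : -((a:ℝ)*ℓ) = (m:ℝ) * (d₁:ℝ) := by exact_mod_cast congrArg (fun t : ℤ => (t:ℝ)) he₂.symm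
  have hexp : ((c:ℝ)*N*x - a*ℓ)^2 + ((c:ℝ)*N*y)^2
      = (m:ℝ)^2 * (((c₁:ℝ)*x + (d₁:ℝ))^2 + ((c₁:ℝ)*y)^2) := by
    have h1 : ((c:ℝ)*N*x - a*ℓ) = (m:ℝ) * ((c₁:ℝ)*x + (d₁:ℝ)) := by
      rw [mul_add]
      rw [show (m:ℝ) * ((c₁:ℝ)*x) = ((c:ℝ)*N)*x by rw [hRc]; ring]
      rw [show (m:ℝ) * (d₁:ℝ) = -((a:ℝ)*ℓ) by rw [hRd]]
      ring
    have h2 : ((c:ℝ)*N*y) = (m:ℝ) * ((c₁:ℝ)*y) := by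
      rw [show (m:ℝ) * ((c₁:ℝ)*y) = ((c:ℝ)*N)*y by rw [hRc]; ring]
    rw [h1, h2]; ring
  rw [hexp]
  have hNR : (0:ℝ) < (N:ℝ) := by exact_mod_cast hN
  have hkeyR : (ℓ:ℝ) * N ≤ (m:ℝ) * m * n := by exact_mod_cast hkey
  have h2 : (ℓ:ℝ) ≤ (m:ℝ)^2 * ((n:ℝ)/N) := by
    rw [show (m:ℝ)^2 * ((n:ℝ)/N) = ((m:ℝ)*m*n)/N by ring, le_div_iff₀ hNR]
    linarith [hkeyR]
  calc (ℓ:ℝ) ≤ (m:ℝ)^2 * ((n:ℝ)/N) := h2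
    _ ≤ (m:ℝ)^2 * (((c₁:ℝ)*x + (d₁:ℝ))^2 + ((c₁:ℝ)*y)^2) := by
        apply mul_le_mul_of_nonneg_left hprim (by positivity)

private lemma aux_Ku (yy uu KK WW : ℝ) (hy : 0 < yy)
    (h : 4*yy^2*uu = 4*yy^2*KK^2 + WW^2) : KK^2 ≤ uu := by
  nlinarith [sq_nonneg WW, mul_pos hy hy]

private lemma aux_Cy (yy uu PP CC tt WW : ℝ) (hy : 0 < yy)
    (h1 : 2*CC*yy^2 = WW - tt) (hW : WW^2 ≤ 4*yy^2*uu) (ht : tt^2 ≤ 4*yy^2*PP) :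
    (CC*yy)^2 ≤ 2*uu + 2*PP := by
  have hup : 4*yy^2*((CC*yy)^2) ≤ 4*yy^2*(2*uu + 2*PP) := by
    have e : 4*yy^2*((CC*yy)^2) = (2*CC*yy^2)^2 := by ring
    rw [e, h1]
    nlinarith [sq_nonneg (WW + tt)]
  exact le_of_mul_le_mul_left hup (by positivity)

private lemma aux_endgame (T lam : ℝ) (hT : 0 < T) (hlam : 0 < lam)
    (h : 1 ≤ 9*T^2*lam^2) : (1/3:ℝ)*T⁻¹ ≤ lam := by
  rw [show (1/3:ℝ)*T⁻¹ = 1/(3*T) by field_simp, div_le_iff₀ (by positivity)]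
  nlinarith [mul_pos hT hlam]

private lemma aux_caseA (l yy δ lam uu BB : ℝ) (hl : 0 < l) (hy : 0 < yy)
    (hδ : 0 < δ) (hlam : 0 < lam)
    (hB2 : BB^2 = 4*yy^2*uu) (hbR : 1 ≤ (BB*l)^2) (hub : uu ≤ δ*lam^2) :
    1 ≤ 9*(l*Real.sqrt δ*yy)^2*lam^2 := by
  have hsd2 : (Real.sqrt δ)^2 = δ := Real.sq_sqrt hδ.le
  have h1 : 4*yy^2*l^2*uu ≤ 4*yy^2*l^2*(δ*lam^2) :=
    mul_le_mul_of_nonneg_left hub (by positivity)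
  have h2 : 1 ≤ 4*yy^2*l^2*(δ*lam^2) := by nlinarith [hbR, hB2]
  have hX : 0 ≤ yy^2*l^2*(δ*lam^2) := by positivity
  calc (1:ℝ) ≤ 4*yy^2*l^2*(δ*lam^2) := h2
    _ ≤ 9*(yy^2*l^2*(δ*lam^2)) := by linarith
    _ = 9*(l*Real.sqrt δ*yy)^2*lam^2 := by
        rw [show ((l*Real.sqrt δ*yy)^2 : ℝ) = l^2*(Real.sqrt δ)^2*yy^2 by ring, hsd2]; ring

private lemma aux_caseB (l lam KK CY : ℝ) (hl : 0 < l) (hlam : 0 < lam)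
    (hsp : l ≤ (l*KK)^2 + (l*CY)^2)
    (hK : KK^2 ≤ lam^2) (hCY : CY^2 ≤ 4*lam^2) :
    1 ≤ 9*(Real.sqrt l)^2*lam^2 := by
  have hsl2 : (Real.sqrt l)^2 = l := Real.sq_sqrt hl.le
  have h1 : l^2*(KK^2 + CY^2) ≤ l^2*(5*lam^2) := by
    apply mul_le_mul_of_nonneg_left _ (by positivity)
    linarith
  have h2 : l ≤ l^2*(5*lam^2) := by nlinarith [hsp]
  have h3 : 1 ≤ l*(5*lam^2) := by
    have := mul_le_mul_of_nonneg_left h2 (le_of_lt (inv_pos.mpr hl))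
    rw [inv_mul_cancel₀ (ne_of_gt hl)] at this
    calc (1:ℝ) ≤ l⁻¹*(l^2*(5*lam^2)) := this
      _ = l*(5*lam^2) := by field_simp
  rw [hsl2]; nlinarith [hlam, hl, sq_nonneg lam]

private lemma aux_bound1 (uu δ lam KK : ℝ) (hδ1 : δ ≤ 1) (hlam : 0 < lam)
    (hKu : KK^2 ≤ uu) (hu : uu ≤ δ*lam^2) : KK^2 ≤ lam^2 := by
  nlinarith [sq_nonneg lam]

private lemma aux_bound2 (uu PP δ lam CY : ℝ) (hδ1 : δ ≤ 1) (hlam : 0 < lam)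
    (hCy : CY^2 ≤ 2*uu + 2*PP) (hu : uu ≤ δ*lam^2) (hP : PP ≤ lam^2) :
    CY^2 ≤ 4*lam^2 := by
  nlinarith [sq_nonneg lam]

/-- The first successive minimum of `g⁻¹R(ℓ)⁰g` with respect to the convex body
`Ω(δ,1) ∩ B_∞⁰`, for `g ∈ SL₂(ℝ)` with `z = g·i` of maximal imaginary part under the
Atkin–Lehner group `A₀(N)`, is `≫ min{ℓ^(−1/2), ℓ⁻¹ δ^(−1/2) y⁻¹}`. -/
theorem stmt_14 :
    ∃ c₀ : ℝ, 0 < c₀ ∧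
    ∀ (N ℓ : ℕ), 0 < N → Squarefree N → ℓ ∣ N → 0 < ℓ →
    ∀ (g : Matrix (Fin 2) (Fin 2) ℝ), g.det = 1 →
    ∀ z : ℂ, z = ((g 0 0 : ℂ) * Complex.I + g 0 1) / ((g 1 0 : ℂ) * Complex.I + g 1 1) →
      0 < z.im →
      -- z has maximal imaginary part in its A₀(N)-orbit
      (∀ (a b c d : ℤ) (Q : ℕ), Q ∣ N → Nat.Coprime Q (N / Q) →
        (N : ℤ) ∣ c → (Q : ℤ) ∣ a → (Q : ℤ) ∣ d → a * d - b * c = (Q : ℤ) →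
        ((((a : ℂ) * z + b) / ((c : ℂ) * z + d)).im ≤ z.im)) →
    ∀ δ : ℝ, 0 < δ → δ ≤ 1 →
    ∀ lam : ℝ,
      -- lam is the first successive minimum of Ω(δ,1) ∩ B_∞⁰ on g⁻¹R(ℓ)⁰g
      (0 < lam ∧
        (∃ v ∈ lattice N ℓ g, v ≠ 0 ∧ Matrix.trace v = 0 ∧
          P v ≤ lam ^ 2 ∧ u v ≤ δ * lam ^ 2) ∧
        (∀ t : ℝ, 0 < t →
          (∃ v ∈ lattice N ℓ g, v ≠ 0 ∧ Matrix.trace v = 0 ∧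
            P v ≤ t ^ 2 ∧ u v ≤ δ * t ^ 2) → lam ≤ t)) →
      c₀ * min (Real.sqrt ℓ)⁻¹ ((ℓ * Real.sqrt δ * z.im)⁻¹) ≤ lam := by
  refine ⟨1/3, by norm_num, ?_⟩
  intro N ℓ hN hsq hlN hl g hdet z hz hy H δ hδ hδ1 lam hmin
  obtain ⟨hlam, ⟨v, hvmem, hvne, hvtr, hPv, huv⟩, -⟩ := hmin
  obtain ⟨a, b, c, hv⟩ := hvmem
  have hlR : (0:ℝ) < (ℓ:ℝ) := by exact_mod_cast hl
  have hNR : (0:ℝ) < (N:ℝ) := by exact_mod_cast hN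
  set A : ℝ := (a:ℝ) with hA
  set B : ℝ := (b:ℝ)/(ℓ:ℝ) with hB
  set C : ℝ := (c:ℝ)*(N:ℝ)/(ℓ:ℝ) with hC
  set p : ℝ := g 0 0 with hp0
  set q : ℝ := g 0 1 with hq0
  set r : ℝ := g 1 0 with hr0
  set s : ℝ := g 1 1 with hs0
  have hdet2 : p * s - q * r = 1 := by rw [Matrix.det_fin_two] at hdet; exact hdet
  have hginv : g⁻¹ = !![s, -q; -r, p] := by
    apply Matrix.inv_eq_right_inv
    rw [Matrix.eta_fin_two g, ← hp0, ← hq0, ← hr0, ← hs0, Matrix.mul_fin_two,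
      Matrix.one_fin_two]
    ext i j
    fin_cases i <;> fin_cases j <;> simp <;> linarith [hdet2]
  have hvmat : v = !![ (s*A + -q*C)*p + (s*B + -q*(-A))*r, (s*A + -q*C)*q + (s*B + -q*(-A))*s;
                       (-r*A + p*C)*p + (-r*B + p*(-A))*r, (-r*A + p*C)*q + (-r*B + p*(-A))*s ] := by
    rw [hv, hginv, Matrix.eta_fin_two g, ← hp0, ← hq0, ← hr0, ← hs0,
      Matrix.mul_fin_two, Matrix.mul_fin_two]
  have hv00 : v 0 0 = (s*A + -q*C)*p + (s*B + -q*(-A))*r := by rw [hvmat]; simp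
  have hv01 : v 0 1 = (s*A + -q*C)*q + (s*B + -q*(-A))*s := by rw [hvmat]; simp
  have hv10 : v 1 0 = (-r*A + p*C)*p + (-r*B + p*(-A))*r := by rw [hvmat]; simp
  have hv11 : v 1 1 = (-r*A + p*C)*q + (-r*B + p*(-A))*s := by rw [hvmat]; simp
  -- relations between z and g
  set x : ℝ := z.re with hx
  set y : ℝ := z.im with hyy
  have hden : ((r:ℂ)*Complex.I + (s:ℂ)) ≠ 0 := by
    intro h0
    have h1 : s = 0 := by
      have := congrArg Complex.re h0; simpa using this
    have h2 : r = 0 := by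
      have := congrArg Complex.im h0; simpa using this
    rw [h1, h2] at hdet2; simp at hdet2
  have hzden : z * ((r:ℂ)*Complex.I + (s:ℂ)) = (p:ℂ)*Complex.I + (q:ℂ) := by
    rw [hz]
    exact div_mul_cancel₀ _ hden
  have hq1 : q = x*s - y*r := by
    have h := congrArg Complex.re hzden
    simp [Complex.mul_re, Complex.add_re, Complex.add_im, Complex.mul_im] at h
    linarith [h]
  have hp1 : p = x*r + y*s := by
    have h := congrArg Complex.im hzden
    simp [Complex.mul_re, Complex.add_re, Complex.add_im, Complex.mul_im] at h
    linarith [h]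
  have hyD : y*(r^2+s^2) = 1 := by
    rw [hp1, hq1] at hdet2; linarith [hdet2, sq_nonneg r, sq_nonneg s]
  have hypos : 0 < y := hy
  -- coordinates
  set K : ℝ := A - C*x with hK
  set W2 : ℝ := 2*A*x + B - C*x^2 + C*y^2 with hW2
  set c2 : ℝ := (s^2 - r^2)*y with hc2d
  set s2 : ℝ := 2*r*s*y with hs2d
  have hc2s2 : c2^2 + s2^2 = 1 := by
    rw [hc2d, hs2d]
    linear_combination (y*(r^2+s^2)+1)*hyD
  have hccoid : 2*y*(v 0 0) = 2*y*c2*K + s2*W2 := by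
    rw [hv00, hp1, hq1, hK, hW2, hc2d, hs2d]; ring
  have hbcoid : y*(v 0 1 + v 1 0) = -(2*y*s2*K) + c2*W2 := by
    rw [hv01, hv10, hp1, hq1, hK, hW2, hc2d, hs2d]; ring
  have hacoid : y*(v 0 1 - v 1 0) = 2*A*x + B - C*(x^2+y^2) := by
    rw [hv01, hv10, hp1, hq1]
    linear_combination (2*A*x + B - C*x^2 - C*y^2) * hyD
  have hv11e : v 1 1 = -(v 0 0) := by
    have := hvtr
    rw [Matrix.trace_fin_two] at this
    linarith [this]
  have hsum : (2*y*(v 0 0))^2 + (y*(v 0 1 + v 1 0))^2 = 4*y^2*K^2 + W2^2 := by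
    linear_combination (2*y*(v 0 0) + (2*y*c2*K + s2*W2))*hccoid
      + (y*(v 0 1 + v 1 0) + (-(2*y*s2*K) + c2*W2))*hbcoid
      + (4*y^2*K^2 + W2^2)*hc2s2
  have huexp : 4*y^2*(u v) = 4*y^2*K^2 + W2^2 := by
    rw [u, hv11e]
    linear_combination hsum
  have hPexp : 4*y^2*(P v) = (y*(v 0 1 - v 1 0))^2 + 4*y^2*K^2 + W2^2 := by
    rw [P, hv11e]
    linear_combination hsum
  -- bounds from the body
  have hKu : K^2 ≤ u v := aux_Ku y (u v) K W2 hypos huexp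
  have hW2u : W2^2 ≤ 4*y^2*(u v) := by linarith [huexp, sq_nonneg (y*K)]
  have hacoP : (y*(v 0 1 - v 1 0))^2 ≤ 4*y^2*(P v) := by
    linarith [hPexp, sq_nonneg (y*K), sq_nonneg W2]
  have h1 : 2*C*y^2 = W2 - (y*(v 0 1 - v 1 0)) := by rw [hW2, hacoid]; ring
  have hCyb : (C*y)^2 ≤ 2*(u v) + 2*(P v) :=
    aux_Cy y (u v) (P v) C (y*(v 0 1 - v 1 0)) W2 hypos h1 hW2u hacoP
  by_cases hac : a = 0 ∧ c = 0
  · -- case a = c = 0 : use second term of min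
    have hA0 : A = 0 := by rw [hA, hac.1]; simp
    have hC0 : C = 0 := by rw [hC, hac.2]; simp
    have hb : b ≠ 0 := by
      intro hb0
      apply hvne
      have hB0 : B = 0 := by rw [hB, hb0]; simp
      have hz0 : !![A, B; C, -A] = (0 : Matrix (Fin 2) (Fin 2) ℝ) := by
        rw [hA0, hB0, hC0]
        ext i j
        fin_cases i <;> fin_cases j <;> simp
      rw [hv, hz0, mul_zero, zero_mul]
    have hbR : (1:ℝ) ≤ (B*(ℓ:ℝ))^2 := by
      have hBl : B*(ℓ:ℝ) = (b:ℝ) := by rw [hB]; field_simp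
      rw [hBl]
      have h1' : (1:ℝ) ≤ |(b:ℝ)| := by
        have h2' := Int.one_le_abs (by exact_mod_cast hb : b ≠ 0)
        calc (1:ℝ) ≤ ((|b| : ℤ) : ℝ) := by exact_mod_cast h2'
          _ = |(b:ℝ)| := by push_cast; ring
      calc (1:ℝ) = 1*1 := by norm_num
        _ ≤ |(b:ℝ)| * |(b:ℝ)| := mul_le_mul h1' h1' (by norm_num) (abs_nonneg _)
        _ = (b:ℝ)^2 := by rw [← abs_mul, ← sq, abs_sq]
    have hK0 : K = 0 := by rw [hK, hA0, hC0]; ring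
    have hW2B : W2 = B := by rw [hW2, hA0, hC0]; ring
    have hB2 : B^2 = 4*y^2*(u v) := by rw [← hW2B, huexp, hK0]; ring
    have hmain : (1:ℝ) ≤ 9*((ℓ:ℝ)*Real.sqrt δ*y)^2*lam^2 :=
      aux_caseA (ℓ:ℝ) y δ lam (u v) B hlR hypos hδ hlam hB2 hbR huv
    have h3 : (1/3:ℝ)*((ℓ:ℝ)*Real.sqrt δ*y)⁻¹ ≤ lam :=
      aux_endgame _ lam (by positivity) hlam hmain
    calc (1/3:ℝ) * min (Real.sqrt ℓ)⁻¹ (((ℓ:ℝ) * Real.sqrt δ * y)⁻¹)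
        ≤ (1/3:ℝ) * (((ℓ:ℝ) * Real.sqrt δ * y)⁻¹) :=
          mul_le_mul_of_nonneg_left (min_le_right _ _) (by norm_num)
      _ ≤ lam := h3
  · -- case (a,c) ≠ (0,0) : use first term of min
    have hsp := spacing N ℓ hN hsq hlN hl z hy H a c hac
    rw [← hx, ← hyy] at hsp
    have e1 : ((c:ℝ)*N*x - a*ℓ) = (ℓ:ℝ)*(-K) := by
      rw [hK, hC, hA]; field_simp; ring
    have e2 : ((c:ℝ)*N*y) = (ℓ:ℝ)*(C*y) := by
      rw [hC]; field_simp
    rw [e1, e2] at hsp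
    have hsp2 : (ℓ:ℝ) ≤ ((ℓ:ℝ)*K)^2 + ((ℓ:ℝ)*(C*y))^2 := by
      calc (ℓ:ℝ) ≤ ((ℓ:ℝ)*(-K))^2 + ((ℓ:ℝ)*(C*y))^2 := hsp
        _ = ((ℓ:ℝ)*K)^2 + ((ℓ:ℝ)*(C*y))^2 := by ring
    have hKl : K^2 ≤ lam^2 := aux_bound1 (u v) δ lam K hδ1 hlam hKu huv
    have hCyl : (C*y)^2 ≤ 4*lam^2 := aux_bound2 (u v) (P v) δ lam (C*y) hδ1 hlam hCyb huv hPv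
    have hmain : (1:ℝ) ≤ 9*(Real.sqrt ℓ)^2*lam^2 :=
      aux_caseB (ℓ:ℝ) lam K (C*y) hlR hlam hsp2 hKl hCyl
    have h3 : (1/3:ℝ)*(Real.sqrt ℓ)⁻¹ ≤ lam :=
      aux_endgame _ lam (Real.sqrt_pos.mpr hlR) hlam hmain
    calc (1/3:ℝ) * min (Real.sqrt ℓ)⁻¹ (((ℓ:ℝ) * Real.sqrt δ * y)⁻¹)
        ≤ (1/3:ℝ) * (Real.sqrt ℓ)⁻¹ :=
          mul_le_mul_of_nonneg_left (min_le_left _ _) (by norm_num)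
      _ ≤ lam := h3

end Stmt14
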